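/- Let (G, p) be a framework in ℝ³ and let λ : E → ℝ. Then for each vertex i, ∑_{j : {i,j} ∈ E} λ {i,j} • (p̂ i ∧ p̂ j) = 0 in Λ²(ℝ⁴) if and only if ∑_{j : {i,j} ∈ E} λ {i,j} • (p j − p i) = 0 in ℝ³. Consequently λ is a projective self-stress of (G, p) if and only if λ is a self-stress of (G, p). -/

import Mathlib

open Matrix

/-- The wedge product `x ∧ y` of two vectors of `ℝ⁴`, viewed inside the exterior algebra
(its value lies in the second exterior power `Λ²(ℝ⁴)`). -/
noncomputable def wedge (x y : Fin 4 → ℝ) : ExteriorAlgebra ℝ (Fin 4 → ℝ) :=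
  ExteriorAlgebra.ι ℝ x * ExteriorAlgebra.ι ℝ y

/-- `p̂ = (p, 1) ∈ ℝ⁴` for `p ∈ ℝ³`. -/
noncomputable def phat (x : Fin 3 → ℝ) : Fin 4 → ℝ := Fin.snoc x 1

/-- The alternating 2-form on `ℝ⁴` extracting the `(k, 3)` minor. -/
noncomputable def coordForm (k : Fin 4) : (Fin 4 → ℝ) [⋀^Fin 2]→ₗ[ℝ] ℝ :=
  (Matrix.detRowAlternating (R := ℝ) (n := Fin 2)).compLinearMap
    (LinearMap.pi fun m : Fin 2 => LinearMap.proj (![k, 3] m))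

/-- A linear functional on the exterior algebra extracting a coordinate of degree-2 parts. -/
noncomputable def coordMap (k : Fin 4) : ExteriorAlgebra ℝ (Fin 4 → ℝ) →ₗ[ℝ] ℝ :=
  ExteriorAlgebra.liftAlternating fun n =>
    match n with
    | 2 => coordForm k
    | _ => 0

lemma coordMap_wedge (k : Fin 4) (x y : Fin 4 → ℝ) :
    coordMap k (wedge x y) = x k * y 3 - x 3 * y k := by
  unfold coordMap wedge
  rw [ExteriorAlgebra.liftAlternating_ι_mul, ExteriorAlgebra.liftAlternating_ι]
  show coordForm k _ = _
  simp only [coordForm, AlternatingMap.compLinearMap_apply]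
  rw [show ∀ v : Fin 2 → Fin 2 → ℝ,
        Matrix.detRowAlternating (R := ℝ) v = Matrix.det (Matrix.of v) from fun _ => rfl,
      Matrix.det_fin_two]
  simp

lemma snoc_smul_sum {α : Type*} (s : Finset α) (c : α → ℝ) (v : α → Fin 3 → ℝ) :
    ∑ j ∈ s, c j • (Fin.snoc (v j) 0 : Fin 4 → ℝ) =
      Fin.snoc (∑ j ∈ s, c j • v j) 0 := by
  funext x
  refine Fin.lastCases ?_ ?_ x <;>
    simp only [Finset.sum_apply, Pi.smul_apply, Fin.snoc_castSucc, Fin.snoc_last] <;> simp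

lemma sum_wedge_eq {α : Type*} (s : Finset α) (c : α → ℝ) (x : Fin 3 → ℝ)
    (q : α → Fin 3 → ℝ) :
    ∑ j ∈ s, c j • wedge (phat x) (phat (q j)) =
      wedge (phat x) (Fin.snoc (∑ j ∈ s, c j • (q j - x)) 0) := by
  have h1 : ∀ j, phat (q j) = (Fin.snoc (q j - x) 0 : Fin 4 → ℝ) + phat x := by
    intro j
    funext z
    refine Fin.lastCases ?_ ?_ z <;>
      simp only [phat, Pi.add_apply, Fin.snoc_castSucc, Fin.snoc_last] <;> simp
  calc ∑ j ∈ s, c j • wedge (phat x) (phat (q j))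
      = ∑ j ∈ s, c j • wedge (phat x) (Fin.snoc (q j - x) 0) := by
        refine Finset.sum_congr rfl fun j _ => ?_
        rw [h1 j]
        unfold wedge
        rw [map_add, mul_add, ExteriorAlgebra.ι_sq_zero, add_zero]
    _ = ExteriorAlgebra.ι ℝ (phat x) *
          ExteriorAlgebra.ι ℝ (∑ j ∈ s, c j • (Fin.snoc (q j - x) 0 : Fin 4 → ℝ)) := by
        rw [map_sum, Finset.mul_sum]
        simp [wedge, mul_smul_comm]
    _ = wedge (phat x) (Fin.snoc (∑ j ∈ s, c j • (q j - x)) 0) := by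
        rw [snoc_smul_sum]; rfl

lemma snoc_last_eq : ((3 : Fin 4)) = Fin.last 3 := by decide

/-- For every vertex `i`, the projective equilibrium condition
`∑_{j : {i,j} ∈ E} λ {i,j} • (p̂ i ∧ p̂ j) = 0` holds iff the Euclidean condition
`∑_{j : {i,j} ∈ E} λ {i,j} • (p j − p i) = 0` holds; consequently `λ` is a
projective self-stress iff `λ` is a self-stress. -/
theorem projective_selfStress_iff_selfStress {V : Type*} [Fintype V] [DecidableEq V]
    (G : SimpleGraph V) [DecidableRel G.Adj] (p : V → Fin 3 → ℝ)
    (hframe : ∀ i j : V, G.Adj i j → p i ≠ p j)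
    (lam : Sym2 V → ℝ) :
    (∀ i : V,
      (∑ j ∈ G.neighborFinset i, lam s(i, j) • wedge (phat (p i)) (phat (p j)) = 0 ↔
       ∑ j ∈ G.neighborFinset i, lam s(i, j) • (p j - p i) = 0)) ∧
    ((∀ i : V, ∑ j ∈ G.neighborFinset i, lam s(i, j) • wedge (phat (p i)) (phat (p j)) = 0) ↔
     (∀ i : V, ∑ j ∈ G.neighborFinset i, lam s(i, j) • (p j - p i) = 0)) := by
  have main : ∀ i : V,
      (∑ j ∈ G.neighborFinset i, lam s(i, j) • wedge (phat (p i)) (phat (p j)) = 0 ↔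
       ∑ j ∈ G.neighborFinset i, lam s(i, j) • (p j - p i) = 0) := by
    intro i
    set S : Fin 3 → ℝ := ∑ j ∈ G.neighborFinset i, lam s(i, j) • (p j - p i) with hS
    have hsum : ∑ j ∈ G.neighborFinset i, lam s(i, j) • wedge (phat (p i)) (phat (p j)) =
        wedge (phat (p i)) (Fin.snoc S 0) :=
      sum_wedge_eq (G.neighborFinset i) (fun j => lam s(i, j)) (p i) p
    rw [hsum]
    constructor
    · intro h
      funext k
      have hc := congrArg (coordMap (Fin.castSucc k)) h
      rw [coordMap_wedge, map_zero] at hc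
      have h3 : (Fin.snoc S 0 : Fin 4 → ℝ) 3 = 0 := by
        rw [snoc_last_eq, Fin.snoc_last]
      have hk : (Fin.snoc S 0 : Fin 4 → ℝ) (Fin.castSucc k) = S k := Fin.snoc_castSucc _ _ _
      have hp3 : phat (p i) 3 = 1 := by
        rw [phat, snoc_last_eq, Fin.snoc_last]
      rw [h3, hk, hp3] at hc
      have : S k = 0 := by linarith [hc]
      simpa using this
    · intro h
      have : (Fin.snoc S 0 : Fin 4 → ℝ) = 0 := by
        rw [h]
        funext z
        refine Fin.lastCases ?_ ?_ z <;> simp only [Pi.zero_apply, Fin.snoc_last, Fin.snoc_castSucc] <;> simp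
      rw [this]
      simp [wedge]
  exact ⟨main, forall_congr' main⟩
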